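/- The decomposition of an asymptotically almost periodic function is unique: if a_1 + b_1 = a_2 + b_2 with a_1, a_2 ∈ AP(ℝ) and b_1, b_2 ∈ C₀(ℝ,ℂ), then a_1 = a_2 and b_1 = b_2. -/

import Mathlib

/-- The character `x ↦ exp(i ξ x)` as a bounded continuous function on `ℝ`. -/
noncomputable def charFn (ξ : ℝ) : BoundedContinuousFunction ℝ ℂ :=
  BoundedContinuousFunction.ofNormedAddCommGroup
    (fun x : ℝ => Complex.exp ((ξ * x : ℝ) * Complex.I))
    (by continuity) 1
    (fun x => le_of_eq (Complex.norm_exp_ofReal_mul_I (ξ * x)))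

/-- `AP(ℝ)`: the sup-norm closure, inside `C_b(ℝ, ℂ)`, of the `ℂ`-linear span of the
characters `x ↦ exp(i ξ x)`. -/
noncomputable def APset : Set (BoundedContinuousFunction ℝ ℂ) :=
  closure ((Submodule.span ℂ (Set.range charFn) : Submodule ℂ (BoundedContinuousFunction ℝ ℂ)) :
    Set (BoundedContinuousFunction ℝ ℂ))

/-- `f(x) → 0` as `|x| → ∞`. -/
def VanishesAtInfty (f : BoundedContinuousFunction ℝ ℂ) : Prop :=
  Filter.Tendsto (fun x => f x) (Filter.cocompact ℝ) (nhds 0)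

open Filter Bornology

lemma norm_exp_real_mul_I (r : ℝ) : ‖Complex.exp ((r : ℂ) * Complex.I)‖ = 1 := by
  exact Complex.norm_exp_ofReal_mul_I r

/-- Simultaneous almost periods: for any finite set of frequencies, any tolerance `δ`,
and any threshold `N`, there is `t ≥ N` with `|exp(iξt) - 1| < δ` for all frequencies. -/
lemma exists_ap (s : Finset ℝ) {δ : ℝ} (hδ : 0 < δ) (N : ℝ) :
    ∃ t : ℝ, N ≤ t ∧ ∀ ξ ∈ s, ‖Complex.exp ((ξ * t : ℝ) * Complex.I) - 1‖ < δ := by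
  set v : ℕ → (s → ℂ) := fun n ξ => Complex.exp (((ξ : ℝ) * n : ℝ) * Complex.I) with hv
  have hb : ∀ n, v n ∈ Metric.closedBall (0 : s → ℂ) 1 := by
    intro n
    rw [Metric.mem_closedBall, dist_zero_right]
    refine pi_norm_le_iff_of_nonneg zero_le_one |>.mpr fun ξ => ?_
    exact le_of_eq (norm_exp_real_mul_I _)
  obtain ⟨z, -, φ, hφ, hconv⟩ :=
    tendsto_subseq_of_bounded Metric.isBounded_closedBall hb
  have hcs : CauchySeq (v ∘ φ) := hconv.cauchySeq
  obtain ⟨K, hK⟩ := Metric.cauchySeq_iff.mp hcs δ hδ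
  set l : ℕ := max K (φ K + Nat.ceil N) with hl
  have hlK : K ≤ l := le_max_left _ _
  have hφl : φ K + Nat.ceil N ≤ φ l := le_trans (le_max_right _ _) hφ.le_apply
  have hφKl : φ K ≤ φ l := le_trans (Nat.le_add_right _ _) hφl
  refine ⟨((φ l - φ K : ℕ) : ℝ), ?_, ?_⟩
  · have h1 : (Nat.ceil N : ℝ) ≤ ((φ l - φ K : ℕ) : ℝ) := by
      have : Nat.ceil N ≤ φ l - φ K := by omega
      exact_mod_cast this
    exact le_trans (Nat.le_ceil N) h1
  · intro ξ hξ
    have hdist : dist (v (φ l)) (v (φ K)) < δ := hK l hlK K le_rfl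
    have hcoord : dist (v (φ l) ⟨ξ, hξ⟩) (v (φ K) ⟨ξ, hξ⟩) < δ :=
      lt_of_le_of_lt (dist_le_pi_dist _ _ _) hdist
    have hfac : Complex.exp ((ξ * (φ l : ℝ) : ℝ) * Complex.I)
        - Complex.exp ((ξ * (φ K : ℝ) : ℝ) * Complex.I)
        = Complex.exp ((ξ * (φ K : ℝ) : ℝ) * Complex.I) *
          (Complex.exp ((ξ * ((φ l - φ K : ℕ) : ℝ) : ℝ) * Complex.I) - 1) := by
      rw [mul_sub, mul_one, ← Complex.exp_add]
      congr 2
      have : ((φ l - φ K : ℕ) : ℝ) = (φ l : ℝ) - (φ K : ℝ) :=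
        Nat.cast_sub hφKl
      push_cast [this]
      ring
    have : ‖Complex.exp ((ξ * ((φ l - φ K : ℕ) : ℝ) : ℝ) * Complex.I) - 1‖
        = dist (v (φ l) ⟨ξ, hξ⟩) (v (φ K) ⟨ξ, hξ⟩) := by
      rw [dist_eq_norm, hv]
      simp only
      rw [hfac, norm_mul, norm_exp_real_mul_I, one_mul]
    rw [this]
    exact hcoord

/-- An almost periodic function vanishing at infinity is zero. -/
lemma ap_vanish_eq_zero (f : BoundedContinuousFunction ℝ ℂ) (hf : f ∈ APset)
    (hv : VanishesAtInfty f) : f = 0 := by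
  have hnorm : ‖f‖ ≤ 0 := by
    refine le_of_forall_pos_le_add fun ε hε => ?_
    rw [zero_add]
    have hε4 : 0 < ε / 4 := by linarith
    -- pick a trigonometric polynomial p with ‖f - p‖ < ε/4
    obtain ⟨p, hpV, hdist⟩ := Metric.mem_closure_iff.mp hf (ε / 4) hε4
    obtain ⟨c, hc⟩ := (Finsupp.mem_span_range_iff_exists_finsupp).mp hpV
    set S : ℝ := 1 + ∑ ξ ∈ c.support, ‖c ξ‖ with hS
    have hSpos : 0 < S := by
      have : (0 : ℝ) ≤ ∑ ξ ∈ c.support, ‖c ξ‖ :=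
        Finset.sum_nonneg fun _ _ => norm_nonneg _
      linarith
    set δ : ℝ := (ε / 4) / S with hδdef
    have hδ : 0 < δ := div_pos hε4 hSpos
    -- evaluation of p
    have hpy : ∀ y : ℝ, p y = ∑ ξ ∈ c.support, c ξ * Complex.exp ((ξ * y : ℝ) * Complex.I) := by
      intro y
      rw [← hc, Finsupp.sum]
      rw [BoundedContinuousFunction.coe_sum]
      simp [charFn, Finset.sum_apply, smul_eq_mul]
    -- f tends to 0 at +∞
    have hvt : Tendsto (fun x => f x) atTop (nhds 0) := by
      refine hv.mono_left ?_
      rw [cocompact_eq_atBot_atTop]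
      exact le_sup_right
    obtain ⟨N₀, hN₀⟩ := eventually_atTop.mp
      ((NormedAddCommGroup.tendsto_nhds_zero.mp hvt) (ε / 4) hε4)
    rw [BoundedContinuousFunction.norm_le (le_of_lt (by linarith : (0:ℝ) < ε))]
    intro x
    obtain ⟨t, ht, hchar⟩ := exists_ap c.support hδ (N₀ - x)
    have hfxt : ‖f (x + t)‖ < ε / 4 := hN₀ (x + t) (by linarith)
    -- ‖p (x+t) - p x‖ ≤ ε/4
    have hpbound : ‖p (x + t) - p x‖ ≤ ε / 4 := by
      rw [hpy, hpy, ← Finset.sum_sub_distrib]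
      refine le_trans (norm_sum_le _ _) ?_
      have hterm : ∀ ξ ∈ c.support,
          ‖c ξ * Complex.exp ((ξ * (x + t) : ℝ) * Complex.I)
            - c ξ * Complex.exp ((ξ * x : ℝ) * Complex.I)‖ ≤ ‖c ξ‖ * δ := by
        intro ξ hξ
        rw [← mul_sub, norm_mul]
        refine mul_le_mul_of_nonneg_left ?_ (norm_nonneg _)
        have hfac : Complex.exp ((ξ * (x + t) : ℝ) * Complex.I)
            - Complex.exp ((ξ * x : ℝ) * Complex.I)
            = Complex.exp ((ξ * x : ℝ) * Complex.I) *
              (Complex.exp ((ξ * t : ℝ) * Complex.I) - 1) := by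
          rw [mul_sub, mul_one, ← Complex.exp_add]
          congr 2
          push_cast
          ring
        rw [hfac, norm_mul, norm_exp_real_mul_I, one_mul]
        exact le_of_lt (hchar ξ hξ)
      refine le_trans (Finset.sum_le_sum hterm) ?_
      rw [← Finset.sum_mul]
      have h1 : (∑ ξ ∈ c.support, ‖c ξ‖) * δ ≤ S * δ := by
        refine mul_le_mul_of_nonneg_right ?_ (le_of_lt hδ)
        rw [hS]; linarith
      have h2 : S * δ = ε / 4 := by
        rw [hδdef]; field_simp
      linarith
    -- pointwise distances
    have hd1 : ‖f x - p x‖ < ε / 4 := by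
      have := BoundedContinuousFunction.dist_coe_le_dist (f := f) (g := p) x
      rw [dist_eq_norm] at this
      exact lt_of_le_of_lt this hdist
    have hd3 : ‖p (x + t) - f (x + t)‖ < ε / 4 := by
      have := BoundedContinuousFunction.dist_coe_le_dist (f := f) (g := p) (x + t)
      rw [dist_eq_norm] at this
      rw [norm_sub_rev]
      exact lt_of_le_of_lt this hdist
    have hsplit : f x = (f x - p x) + (p x - p (x + t)) + (p (x + t) - f (x + t)) + f (x + t) := by
      ring
    calc ‖f x‖ = ‖(f x - p x) + (p x - p (x + t)) + (p (x + t) - f (x + t)) + f (x + t)‖ := by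
          rw [← hsplit]
      _ ≤ ‖f x - p x‖ + ‖p x - p (x + t)‖ + ‖p (x + t) - f (x + t)‖ + ‖f (x + t)‖ := by
          refine le_trans (norm_add_le _ _) ?_
          refine add_le_add ?_ le_rfl
          refine le_trans (norm_add_le _ _) ?_
          exact add_le_add (norm_add_le _ _) le_rfl
      _ ≤ ε := by
          rw [norm_sub_rev (p x)] at *
          linarith
  have := norm_le_zero_iff.mp hnorm
  exact this

/-- Uniqueness of the decomposition of an asymptotically almost periodic function into an
almost periodic part and a part vanishing at infinity. -/
theorem AAP_decomposition_unique (a₁ a₂ b₁ b₂ : BoundedContinuousFunction ℝ ℂ)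
    (ha₁ : a₁ ∈ APset) (ha₂ : a₂ ∈ APset)
    (hb₁ : VanishesAtInfty b₁) (hb₂ : VanishesAtInfty b₂)
    (h : a₁ + b₁ = a₂ + b₂) : a₁ = a₂ ∧ b₁ = b₂ := by
  set V : Submodule ℂ (BoundedContinuousFunction ℝ ℂ) := Submodule.span ℂ (Set.range charFn)
  have hsub : a₁ - a₂ ∈ APset := by
    have h1 : a₁ ∈ V.topologicalClosure := ha₁
    have h2 : a₂ ∈ V.topologicalClosure := ha₂
    exact sub_mem h1 h2
  have heq : a₁ - a₂ = b₂ - b₁ := by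
    rw [sub_eq_sub_iff_add_eq_add]
    rw [h]; ring
  have hvan : VanishesAtInfty (a₁ - a₂) := by
    rw [heq]
    unfold VanishesAtInfty
    have : Tendsto (fun x => b₂ x - b₁ x) (Filter.cocompact ℝ) (nhds 0) := by
      have := hb₂.sub hb₁
      simpa using this
    simpa [BoundedContinuousFunction.coe_sub] using this
  have hz : a₁ - a₂ = 0 := ap_vanish_eq_zero _ hsub hvan
  have ha : a₁ = a₂ := sub_eq_zero.mp hz
  refine ⟨ha, ?_⟩
  rw [ha] at h
  exact add_left_cancel h
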